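/- Define T̃(r,x,y) = T_t(x,y) where t = t(x,r) satisfies μ(B(x,√t)) = r. Then for every δ > 0 there is C > 0 such that 0 ≤ T̃(r,x,y) ≤ C·r^{-1}·(1 + d̃(x,y)/r)^{-1-δ} for all x,y ∈ X and r > 0. -/

import Mathlib

open MeasureTheory Metric

/-- Upper estimate (U₂) for the rescaled kernel `T̃(r,x,y) = T_{t(x,r)}(x,y)`,
where `μ(B(x,√t)) = r`: for every `δ > 0`,
`0 ≤ T̃(r,x,y) ≤ C r⁻¹ (1 + d̃(x,y)/r)^{-1-δ}`. -/
theorem rescaled_kernel_upper_estimate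
    {X : Type*} [MetricSpace X] [MeasurableSpace X] [BorelSpace X]
    (μ : Measure X)
    (hvol : ∀ (x : X) (r : ℝ), 0 < r → 0 < (μ (closedBall x r)).toReal)
    (Cd q : ℝ) (hCd : 0 < Cd) (hq : 0 < q)
    (hdouble : ∀ (x : X) (r s : ℝ), 0 < r → 1 ≤ s →
      (μ (closedBall x (s * r))).toReal ≤ Cd * s ^ q * (μ (closedBall x r)).toReal)
    (hΦ : ∀ x : X, Set.BijOn (fun u : ℝ => (μ (closedBall x u)).toReal)
      (Set.Ioi 0) (Set.Ioi 0))
    (dt : X → X → ℝ)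
    (Cb : ℝ) (hCb : 0 < Cb)
    (hdt : ∀ x y : X,
      Cb⁻¹ * (μ (closedBall x (dist x y))).toReal ≤ dt x y ∧
      dt x y ≤ (μ (closedBall x (dist x y))).toReal)
    (T : ℝ → X → X → ℝ)
    (hTnonneg : ∀ (t : ℝ), 0 < t → ∀ x y : X, 0 ≤ T t x y)
    (C₀ c₂ : ℝ) (hC₀ : 0 < C₀) (hc₂ : 0 < c₂)
    (hupper : ∀ (t : ℝ), 0 < t → ∀ x y : X,
      T t x y ≤ C₀ / (μ (closedBall x (Real.sqrt t))).toReal *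
          Real.exp (-c₂ * dist x y ^ 2 / t)) :
    ∀ δ > (0 : ℝ), ∃ C > (0 : ℝ), ∀ (x y : X) (r t : ℝ), 0 < r → 0 < t →
      (μ (closedBall x (Real.sqrt t))).toReal = r →
      0 ≤ T t x y ∧
      T t x y ≤ C * r⁻¹ * (1 + dt x y / r) ^ (-(1 + δ)) := by
  intro δ hδ
  set α : ℝ := q * (1 + δ) with hα
  have hαpos : 0 < α := by positivity
  obtain ⟨n, hn⟩ : ∃ n : ℕ, α ≤ 2 * n := by
    obtain ⟨n, hn⟩ := exists_nat_ge α
    exact ⟨n, hn.trans (by nlinarith [Nat.cast_nonneg (α := ℝ) n])⟩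
  set K : ℝ := (n.factorial : ℝ) / c₂ ^ n with hK
  have hKpos : 0 < K := by positivity
  -- Key Gaussian decay estimate
  have key : ∀ s : ℝ, 1 ≤ s → Real.exp (-(c₂ * s ^ 2)) ≤ K * s ^ (-α) := by
    intro s hs
    have hs0 : (0 : ℝ) < s := lt_of_lt_of_le one_pos hs
    have h1 : (c₂ * s ^ 2) ^ n / (n.factorial : ℝ) ≤ Real.exp (c₂ * s ^ 2) :=
      Real.pow_div_factorial_le_exp (c₂ * s ^ 2) (by positivity) n
    have hpos : (0 : ℝ) < (c₂ * s ^ 2) ^ n / (n.factorial : ℝ) := by positivity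
    have h2 : Real.exp (-(c₂ * s ^ 2)) ≤ (n.factorial : ℝ) / (c₂ * s ^ 2) ^ n := by
      rw [Real.exp_neg]
      calc (Real.exp (c₂ * s ^ 2))⁻¹ ≤ ((c₂ * s ^ 2) ^ n / (n.factorial : ℝ))⁻¹ :=
            inv_anti₀ hpos h1
        _ = (n.factorial : ℝ) / (c₂ * s ^ 2) ^ n := by
            rw [inv_div]
    have h3 : s ^ α ≤ s ^ (2 * n : ℕ) := by
      rw [← Real.rpow_natCast s (2 * n)]
      exact Real.rpow_le_rpow_of_exponent_le hs (by push_cast; linarith)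
    have h4 : ((s : ℝ) ^ (2 * n : ℕ))⁻¹ ≤ (s ^ α)⁻¹ :=
      inv_anti₀ (Real.rpow_pos_of_pos hs0 α) h3
    calc Real.exp (-(c₂ * s ^ 2)) ≤ (n.factorial : ℝ) / (c₂ * s ^ 2) ^ n := h2
      _ = K * (s ^ (2 * n : ℕ))⁻¹ := by
          rw [hK, mul_pow, ← pow_mul]
          field_simp
      _ ≤ K * (s ^ α)⁻¹ := by
          exact mul_le_mul_of_nonneg_left h4 hKpos.le
      _ = K * s ^ (-α) := by rw [Real.rpow_neg hs0.le]
  have hP0 : (0:ℝ) < (1 + Cd) ^ (1 + δ) := Real.rpow_pos_of_pos (by linarith) _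
  have h20 : (0:ℝ) < (2:ℝ) ^ (1 + δ) := Real.rpow_pos_of_pos two_pos _
  refine ⟨C₀ * ((2 : ℝ) ^ (1 + δ) + K * (1 + Cd) ^ (1 + δ)), by positivity, ?_⟩
  obtain ⟨C, hCdef⟩ : ∃ C : ℝ, C₀ * ((2 : ℝ) ^ (1 + δ) + K * (1 + Cd) ^ (1 + δ)) = C := ⟨_, rfl⟩
  rw [hCdef]
  have hCpos : (0:ℝ) < C := by rw [← hCdef]; positivity
  have hC1 : C₀ * (2:ℝ) ^ (1 + δ) ≤ C := by
    rw [← hCdef]; nlinarith [mul_pos hC₀ (mul_pos hKpos hP0)]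
  have hC2 : C₀ * K * (1 + Cd) ^ (1 + δ) ≤ C := by
    rw [← hCdef]; nlinarith [mul_pos hC₀ h20]
  intro x y r t hr ht hrt
  refine ⟨hTnonneg t ht x y, ?_⟩
  have hst : 0 < Real.sqrt t := Real.sqrt_pos.mpr ht
  set d := dist x y with hd
  have hd0 : 0 ≤ d := dist_nonneg
  have hdtn : 0 ≤ dt x y :=
    le_trans (by positivity) (hdt x y).1
  have hbase : (1 : ℝ) ≤ 1 + dt x y / r := by
    have := div_nonneg hdtn hr.le; linarith
  have hbpos : (0 : ℝ) < 1 + dt x y / r := lt_of_lt_of_le one_pos hbase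
  have hfin : μ (closedBall x (Real.sqrt t)) ≠ ⊤ := by
    intro h
    rw [h, ENNReal.toReal_top] at hrt
    exact absurd hrt.symm hr.ne'
  have hT : T t x y ≤ C₀ / r * Real.exp (-c₂ * d ^ 2 / t) := by
    have := hupper t ht x y
    rwa [hrt] at this
  have hE : Real.sqrt t ^ 2 = t := Real.sq_sqrt ht.le
  rcases le_or_gt d (Real.sqrt t) with hcase | hcase
  · -- near case: dt x y ≤ r
    have hmono : dt x y ≤ r := by
      calc dt x y ≤ (μ (closedBall x d)).toReal := (hdt x y).2
        _ ≤ (μ (closedBall x (Real.sqrt t))).toReal :=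
            ENNReal.toReal_mono hfin (measure_mono (closedBall_subset_closedBall hcase))
        _ = r := hrt
    have h2 : 1 + dt x y / r ≤ 2 := by
      have : dt x y / r ≤ 1 := (div_le_one hr).mpr hmono
      linarith
    have hEle : (2 : ℝ) ^ (-(1 + δ)) ≤ (1 + dt x y / r) ^ (-(1 + δ)) := by
      rw [Real.rpow_neg hbpos.le, Real.rpow_neg (by norm_num : (0:ℝ) ≤ 2)]
      exact inv_anti₀ (Real.rpow_pos_of_pos hbpos (1 + δ))
        (Real.rpow_le_rpow hbpos.le h2 (by linarith))
    have hexp : Real.exp (-c₂ * d ^ 2 / t) ≤ 1 := by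
      rw [Real.exp_le_one_iff]
      have h : 0 ≤ c₂ * d ^ 2 / t := by positivity
      have he : -c₂ * d ^ 2 / t = -(c₂ * d ^ 2 / t) := by ring
      rw [he]; linarith
    calc T t x y ≤ C₀ / r * Real.exp (-c₂ * d ^ 2 / t) := hT
      _ ≤ C₀ / r * 1 := by
          exact mul_le_mul_of_nonneg_left hexp (by positivity)
      _ = (C₀ * (2 : ℝ) ^ (1 + δ)) * r⁻¹ * (2 : ℝ) ^ (-(1 + δ)) := by
          rw [Real.rpow_neg (by norm_num : (0:ℝ) ≤ 2)]
          have h2ne : ((2 : ℝ) ^ (1 + δ)) ≠ 0 := (Real.rpow_pos_of_pos two_pos _).ne'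
          field_simp
      _ ≤ C * r⁻¹ * (1 + dt x y / r) ^ (-(1 + δ)) := by
          gcongr
  · -- far case
    set s : ℝ := d / Real.sqrt t with hs
    have hs1 : 1 ≤ s := by
      rw [hs, le_div_iff₀ hst]; linarith
    have hs0 : 0 < s := lt_of_lt_of_le one_pos hs1
    have hsd : s * Real.sqrt t = d := by
      rw [hs]; field_simp
    have hsq : (1 : ℝ) ≤ s ^ q := Real.one_le_rpow hs1 hq.le
    have hdtle : dt x y ≤ Cd * s ^ q * r := by
      calc dt x y ≤ (μ (closedBall x d)).toReal := (hdt x y).2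
        _ = (μ (closedBall x (s * Real.sqrt t))).toReal := by rw [hsd]
        _ ≤ Cd * s ^ q * (μ (closedBall x (Real.sqrt t))).toReal := hdouble x _ s hst hs1
        _ = Cd * s ^ q * r := by rw [hrt]
    have hb2 : 1 + dt x y / r ≤ (1 + Cd) * s ^ q := by
      have h1 : dt x y / r ≤ Cd * s ^ q := by
        rw [div_le_iff₀ hr]; linarith
      nlinarith
    have hpow : (1 + dt x y / r) ^ (1 + δ) ≤ (1 + Cd) ^ (1 + δ) * s ^ α := by
      calc (1 + dt x y / r) ^ (1 + δ) ≤ ((1 + Cd) * s ^ q) ^ (1 + δ) :=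
            Real.rpow_le_rpow hbpos.le hb2 (by linarith)
        _ = (1 + Cd) ^ (1 + δ) * (s ^ q) ^ (1 + δ) :=
            Real.mul_rpow (by linarith) (by positivity)
        _ = (1 + Cd) ^ (1 + δ) * s ^ α := by
            rw [← Real.rpow_mul hs0.le]
    have hEge : ((1 + Cd) ^ (1 + δ))⁻¹ * s ^ (-α) ≤ (1 + dt x y / r) ^ (-(1 + δ)) := by
      rw [Real.rpow_neg hbpos.le, Real.rpow_neg hs0.le, ← mul_inv]
      exact inv_anti₀ (Real.rpow_pos_of_pos hbpos _) hpow
    have hexp : Real.exp (-c₂ * d ^ 2 / t) ≤ K * s ^ (-α) := by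
      have hsq2 : s ^ 2 = d ^ 2 / t := by
        rw [hs, div_pow, hE]
      have : -c₂ * d ^ 2 / t = -(c₂ * s ^ 2) := by
        rw [hsq2]; field_simp
      rw [this]
      exact key s hs1
    obtain ⟨S, hSdef⟩ : ∃ S : ℝ, s ^ (-α) = S := ⟨_, rfl⟩
    obtain ⟨P, hPdef⟩ : ∃ P : ℝ, (1 + Cd) ^ (1 + δ) = P := ⟨_, rfl⟩
    have hsapos : 0 < S := hSdef ▸ Real.rpow_pos_of_pos hs0 _
    have hCdpos : 0 < P := hPdef ▸ Real.rpow_pos_of_pos (by linarith) _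
    rw [hPdef, hSdef] at hEge
    rw [hSdef] at hexp
    rw [hPdef] at hC2
    calc T t x y ≤ C₀ / r * Real.exp (-c₂ * d ^ 2 / t) := hT
      _ ≤ C₀ / r * (K * S) := by
          exact mul_le_mul_of_nonneg_left hexp (by positivity)
      _ = (C₀ * K * P) * r⁻¹ * (P⁻¹ * S) := by
          field_simp
      _ ≤ C * r⁻¹ * (1 + dt x y / r) ^ (-(1 + δ)) := by
          gcongr
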